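/- Let P be a partially ordered set in which every chain is finite (equivalently, P satisfies both the ascending and descending chain conditions). Then the lattice Co(P) of order-convex subsets of P, ordered by inclusion, is strongly coatomic: if A ⊊ B are order-convex subsets of P, then there exists b ∈ B \ A such that B \ {b} is order-convex and A ⊆ B \ {b} (so that B \ {b} is covered by B in Co(P)). -/

import Mathlib

private lemma exists_max_above {P : Type*} [PartialOrder P]
    (hchain : ∀ C : Set P, IsChain (· ≤ ·) C → C.Finite)
    (B : Set P) (b : P) (hb : b ∈ B) :
    ∃ m, b ≤ m ∧ Maximal (· ∈ B) m := by
  apply zorn_le_nonempty₀ B ?_ b hb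
  intro c hcB hc y hy
  obtain ⟨m, hmc, hm⟩ := Set.Finite.exists_maximalFor id c (hchain c hc) ⟨y, hy⟩
  refine ⟨m, hcB hmc, fun z hz => ?_⟩
  rcases hc.total hz hmc with h | h
  · exact h
  · exact hm hz h

theorem coPoset_stronglyCoatomic {P : Type*} [PartialOrder P]
    (hchain : ∀ C : Set P, IsChain (· ≤ ·) C → C.Finite)
    (A B : Set P) (hA : A.OrdConnected) (hB : B.OrdConnected) (hAB : A ⊂ B) :
    ∃ b ∈ B \ A, (B \ {b}).OrdConnected ∧ A ⊆ B \ {b} ∧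
      ∀ C : Set P, C.OrdConnected → B \ {b} ⊆ C → C ⊆ B →
        C = B \ {b} ∨ C = B := by
  obtain ⟨b₀, hb₀B, hb₀A⟩ := Set.exists_of_ssubset hAB
  -- maximal element above b₀
  obtain ⟨m, hbm, hmB, hmmax⟩ := exists_max_above hchain B b₀ hb₀B
  -- minimal element below b₀ (dual)
  have hchain' : ∀ C : Set Pᵒᵈ, IsChain (· ≤ ·) C → C.Finite := by
    intro C hc
    exact hchain (OrderDual.ofDual '' C) (by
      rintro _ ⟨p, hp, rfl⟩ _ ⟨q, hq, rfl⟩ hpq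
      rcases hc hp hq hpq with h | h
      · exact Or.inr h
      · exact Or.inl h) |>.of_finite_image (Set.injOn_of_injective (fun a b h => h))
  obtain ⟨n, hbn, hnB, hnmin⟩ := exists_max_above hchain' (OrderDual.toDual '' B) (OrderDual.toDual b₀) ⟨b₀, hb₀B, rfl⟩
  obtain ⟨n', hn'B, rfl⟩ := hnB
  have hnmin' : ∀ y ∈ B, y ≤ n' → n' ≤ y := by
    intro y hy hyn
    exact hnmin ⟨y, hy, rfl⟩ hyn
  have hbn' : n' ≤ b₀ := hbn
  -- not both m and n' in A
  have key : m ∉ A ∨ n' ∉ A := by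
    by_contra h
    push_neg at h
    exact hb₀A (hA.out h.2 h.1 ⟨hbn', hbm⟩)
  have cover : ∀ b : P, ∀ C : Set P, B \ {b} ⊆ C → C ⊆ B → C = B \ {b} ∨ C = B := by
    intro b C h1 h2
    by_cases hbC : b ∈ C
    · right
      refine subset_antisymm h2 fun x hx => ?_
      by_cases hxb : x = b
      · exact hxb ▸ hbC
      · exact h1 ⟨hx, hxb⟩
    · left
      exact subset_antisymm (fun x hx => ⟨h2 hx, fun he => hbC (he ▸ hx)⟩) h1
  have conv : ∀ b ∈ B, (∀ x ∈ B, ∀ y ∈ B, x ≤ b → b ≤ y → x = b ∨ y = b) →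
      (B \ {b}).OrdConnected := by
    intro b _ hb
    constructor
    rintro x ⟨hxB, hxb⟩ y ⟨hyB, hyb⟩ z ⟨hxz, hzy⟩
    refine ⟨hB.out hxB hyB ⟨hxz, hzy⟩, fun hz => ?_⟩
    simp only [Set.mem_singleton_iff] at hz hxb hyb
    subst hz
    rcases hb x hxB y hyB hxz hzy with h | h
    · exact hxb h
    · exact hyb h
  rcases key with hm | hn
  · refine ⟨m, ⟨hmB, hm⟩, conv m hmB ?_, fun a ha => ⟨hAB.subset ha, fun he => hm (he ▸ ha)⟩,
      fun C _ h1 h2 => cover m C h1 h2⟩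
    intro x hx y hy hxm hmy
    exact Or.inr (le_antisymm (hmmax hy hmy) hmy)
  · refine ⟨n', ⟨hn'B, hn⟩, conv n' hn'B ?_, fun a ha => ⟨hAB.subset ha, fun he => hn (he ▸ ha)⟩,
      fun C _ h1 h2 => cover n' C h1 h2⟩
    intro x hx y hy hxn hny
    exact Or.inl (le_antisymm hxn (hnmin' x hx hxn))
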